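/- Let c ≥ 1 be a real number, let G be a finite graph and T a tournament on the same vertex set. Suppose that for every vertex v the fractional chromatic number of G[N⁺_T(v)] is at most c, i.e., there is a finitely supported probability distribution on the independent sets of G[N⁺_T(v)] such that every vertex of N⁺_T(v) belongs to the random independent set with probability at least 1/c. Then the fractional chromatic number of G is at most 2(c+1), i.e., there is a finitely supported probability distribution on the independent sets of G such that every vertex of G belongs to the random independent set with probability at least 1/(2(c+1)). -/

import Mathlib

open scoped Classical

/-- A tournament on `V`: an orientation of the complete graph, i.e. an irreflexive
relation such that for distinct vertices exactly one direction is present. -/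
def IsTournament {V : Type*} (r : V → V → Prop) : Prop :=
  (∀ v, ¬ r v v) ∧ ∀ u v : V, u ≠ v → (r u v ↔ ¬ r v u)



noncomputable def tsgn {V : Type*} (r : V → V → Prop) (v u : V) : ℝ :=
  if r v u then 1 else if r u v then -1 else 0

lemma tsgn_skew {V : Type*} {r : V → V → Prop} (hr : IsTournament r) (v u : V) :
    tsgn r u v = - tsgn r v u := by
  unfold tsgn
  rcases eq_or_ne v u with rfl | hne
  · simp [hr.1 v]
  · by_cases h1 : r v u
    · have h2 : ¬ r u v := by
        intro h2; exact ((hr.2 u v hne.symm).mp h2) h1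
      simp [h1, h2]
    · have h2 : r u v := (hr.2 u v hne.symm).mpr h1
      simp [h1, h2]

lemma sum_mul_tsgn {V : Type*} [Fintype V] {r : V → V → Prop} (hr : IsTournament r)
    (q : V → ℝ) (u : V) :
    ∑ v, q v * tsgn r v u =
      (∑ v ∈ Finset.univ.filter (fun v => r v u), q v)
        - ∑ v ∈ Finset.univ.filter (fun v => r u v), q v := by
  rw [Finset.sum_filter, Finset.sum_filter, ← Finset.sum_sub_distrib]
  apply Finset.sum_congr rfl
  intro v _
  unfold tsgn
  rcases eq_or_ne v u with rfl | hne
  · simp [hr.1 v]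
  · by_cases h1 : r v u
    · have h2 : ¬ r u v := by
        intro h2; exact ((hr.2 u v hne.symm).mp h2) h1
      simp [h1, h2]
    · have h2 : r u v := (hr.2 u v hne.symm).mpr h1
      simp [h1, h2]

lemma tournament_strategy {V : Type*} [Fintype V] [Nonempty V]
    (r : V → V → Prop) (hr : IsTournament r) :
    ∃ q : V → ℝ, (∀ v, 0 ≤ q v) ∧ (∑ v, q v = 1) ∧
      ∀ u : V, ∑ v ∈ Finset.univ.filter (fun v => r u v), q v
        ≤ ∑ v ∈ Finset.univ.filter (fun v => r v u), q v := by
  set Φ : (V → ℝ) →ₗ[ℝ] (V → ℝ) :=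
    { toFun := fun q u => ∑ v, q v * tsgn r v u
      map_add' := by
        intro a b; funext u
        simp [add_mul, Finset.sum_add_distrib]
      map_smul' := by
        intro m a; funext u
        simp [Finset.mul_sum, mul_assoc] } with hΦ
  have hΦapp : ∀ (q : V → ℝ) (u : V), Φ q u = ∑ v, q v * tsgn r v u := fun q u => rfl
  have hΦcont : Continuous Φ := Φ.continuous_of_finiteDimensional
  have key : ∃ q ∈ stdSimplex ℝ V, ∀ u, 0 ≤ Φ q u := by
    by_contra hcon
    push_neg at hcon
    have hdisj : Disjoint (Φ '' stdSimplex ℝ V) {y : V → ℝ | ∀ u, 0 ≤ y u} := by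
      rw [Set.disjoint_left]
      rintro a ⟨q, hq, rfl⟩ ha
      obtain ⟨u, hu⟩ := hcon q hq
      exact absurd (ha u) (not_le.mpr hu)
    have hCc : Convex ℝ (Φ '' stdSimplex ℝ V) :=
      (convex_stdSimplex ℝ V).linear_image Φ
    have hCk : IsCompact (Φ '' stdSimplex ℝ V) :=
      (isCompact_stdSimplex ℝ V).image hΦcont
    have hKc : Convex ℝ {y : V → ℝ | ∀ u, 0 ≤ y u} := by
      intro x hx y hy a b ha hb hab u
      exact add_nonneg (mul_nonneg ha (hx u)) (mul_nonneg hb (hy u))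
    have hKcl : IsClosed {y : V → ℝ | ∀ u, 0 ≤ y u} := by
      have : {y : V → ℝ | ∀ u, 0 ≤ y u} = ⋂ u, {y : V → ℝ | 0 ≤ y u} := by
        ext y; simp [Set.mem_iInter]
      rw [this]
      exact isClosed_iInter fun u => isClosed_le continuous_const (continuous_apply u)
    obtain ⟨f, a, b, hfa, hab, hfb⟩ :=
      geometric_hahn_banach_compact_closed hCc hCk hKc hKcl hdisj
    have hb0 : b < 0 := by
      have := hfb 0 (fun u => le_rfl)
      simpa using this
    set y : V → ℝ := fun u => f (Pi.single u 1) with hy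
    have hfx : ∀ x : V → ℝ, f x = ∑ u, x u * y u := by
      intro x
      conv_lhs => rw [pi_eq_sum_univ x]
      rw [map_sum]
      apply Finset.sum_congr rfl
      intro u _
      rw [map_smul]
      have he : (fun j => if u = j then (1:ℝ) else 0) = Pi.single u 1 := by
        funext j; simp [Pi.single_apply, eq_comm]
      rw [he, smul_eq_mul]
    have hy0 : ∀ u, 0 ≤ y u := by
      intro u
      by_contra hneg
      push_neg at hneg
      have hpos : 0 < b / y u := div_pos_of_neg_of_neg hb0 hneg
      have hmem : (b / y u) • (Pi.single u 1 : V → ℝ) ∈ {z : V → ℝ | ∀ w, 0 ≤ z w} := by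
        intro w
        rcases eq_or_ne w u with rfl | hw
        · simp [Pi.single_apply, hpos.le]
        · simp [Pi.single_apply, hw]
      have hlt := hfb _ hmem
      rw [map_smul, smul_eq_mul] at hlt
      have : f (Pi.single u 1) = y u := rfl
      rw [this, div_mul_cancel₀ _ (ne_of_lt hneg)] at hlt
      exact lt_irrefl _ hlt
    have hyne : ∃ u, y u ≠ 0 := by
      by_contra hall
      push_neg at hall
      have hf0 : ∀ x : V → ℝ, f x = 0 := by
        intro x; rw [hfx]; simp [hall]
      have hmem : Φ (Pi.single (Classical.arbitrary V) 1) ∈ Φ '' stdSimplex ℝ V :=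
        ⟨_, single_mem_stdSimplex ℝ _, rfl⟩
      have h1 := hfa _ hmem
      rw [hf0] at h1
      linarith
    have hsumy : 0 < ∑ u, y u := by
      obtain ⟨u0, hu0⟩ := hyne
      exact Finset.sum_pos' (fun u _ => hy0 u)
        ⟨u0, Finset.mem_univ u0, lt_of_le_of_ne (hy0 u0) (Ne.symm hu0)⟩
    set q : V → ℝ := (∑ u, y u)⁻¹ • y with hq
    have hqmem : q ∈ stdSimplex ℝ V := by
      constructor
      · intro u
        exact mul_nonneg (inv_nonneg.mpr hsumy.le) (hy0 u)
      · simp only [hq, Pi.smul_apply, smul_eq_mul]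
        rw [← Finset.mul_sum, inv_mul_cancel₀ (ne_of_gt hsumy)]
    have hskewsum : ∑ u, ∑ v, y v * tsgn r v u * y u = 0 := by
      have h1 : ∑ u, ∑ v, y v * tsgn r v u * y u
          = ∑ v, ∑ u, y v * tsgn r v u * y u := Finset.sum_comm
      have h2 : ∑ v, ∑ u, y v * tsgn r v u * y u
          = -∑ u, ∑ v, y v * tsgn r v u * y u := by
        rw [← Finset.sum_neg_distrib]
        apply Finset.sum_congr rfl
        intro v _
        rw [← Finset.sum_neg_distrib]
        apply Finset.sum_congr rfl
        intro u _
        rw [tsgn_skew hr]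
        ring
      linarith [h1.trans h2]
    have hfq : f (Φ q) = 0 := by
      rw [hfx]
      have : ∀ u, Φ q u * y u = (∑ v, y v)⁻¹ * ∑ v, y v * tsgn r v u * y u := by
        intro u
        rw [hΦapp, Finset.sum_mul, Finset.mul_sum]
        apply Finset.sum_congr rfl
        intro v _
        simp only [hq, Pi.smul_apply, smul_eq_mul]
        ring
      rw [Finset.sum_congr rfl (fun u _ => this u), ← Finset.mul_sum, hskewsum, mul_zero]
    have h1 := hfa _ ⟨q, hqmem, rfl⟩
    rw [hfq] at h1
    linarith
  obtain ⟨q, hq, hq2⟩ := key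
  refine ⟨q, fun v => hq.1 v, hq.2, fun u => ?_⟩
  have h3 := hq2 u
  rw [hΦapp, sum_mul_tsgn hr] at h3
  linarith

/-- Let c ≥ 1, G a finite graph, T a tournament on the same vertex set.
If for every vertex v there is a probability distribution on the independent sets of
G[N⁺_T(v)] covering every vertex of N⁺_T(v) with probability at least 1/c, then there
is a probability distribution on the independent sets of G covering every vertex with
probability at least 1/(2(c+1)); i.e. χ_f(G[N⁺_T(v)]) ≤ c for all v implies
χ_f(G) ≤ 2(c+1). -/
theorem stmt_7 {V : Type*} [Fintype V] (c : ℝ) (hc : 1 ≤ c)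
    (G : SimpleGraph V) (r : V → V → Prop) (hr : IsTournament r)
    (h : ∀ v : V, ∃ p : Finset V → ℝ,
      (∀ S, 0 ≤ p S) ∧
      (∀ S, p S ≠ 0 → (∀ x ∈ S, r v x) ∧ ∀ x ∈ S, ∀ y ∈ S, ¬ G.Adj x y) ∧
      (∑ S : Finset V, p S = 1) ∧
      (∀ u : V, r v u → 1 / c ≤ ∑ S ∈ Finset.univ.filter (fun S : Finset V => u ∈ S), p S)) :
    ∃ p : Finset V → ℝ,
      (∀ S, 0 ≤ p S) ∧
      (∀ S, p S ≠ 0 → ∀ x ∈ S, ∀ y ∈ S, ¬ G.Adj x y) ∧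
      (∑ S : Finset V, p S = 1) ∧
      (∀ u : V, 1 / (2 * (c + 1)) ≤
        ∑ S ∈ Finset.univ.filter (fun S : Finset V => u ∈ S), p S) := by

  rcases isEmpty_or_nonempty V with hV | hV
  · refine ⟨fun S => if S = ∅ then 1 else 0, ?_, ?_, ?_, ?_⟩
    · intro S; dsimp only; split <;> norm_num
    · intro S _ x hx
      exact isEmptyElim x
    · rw [Finset.sum_ite_eq' Finset.univ (∅ : Finset V) (fun _ => (1:ℝ))]
      simp
      exact Subsingleton.elim _ _
    · intro u; exact isEmptyElim u
  · obtain ⟨q, hq0, hq1, hq2⟩ := tournament_strategy r hr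
    choose p hp1 hp2 hp3 hp4 using h
    have hc0 : (0:ℝ) < c := by linarith
    have hc1 : (0:ℝ) < c + 1 := by linarith
    refine ⟨fun S => (1/(c+1)) * (∑ v, q v * (if S = {v} then 1 else 0))
        + (c/(c+1)) * (∑ v, q v * p v S), ?_, ?_, ?_, ?_⟩
    · intro S
      have h1 : 0 ≤ ∑ v, q v * (if S = {v} then (1:ℝ) else 0) :=
        Finset.sum_nonneg fun v _ => mul_nonneg (hq0 v) (by split <;> norm_num)
      have h2 : 0 ≤ ∑ v, q v * p v S :=
        Finset.sum_nonneg fun v _ => mul_nonneg (hq0 v) (hp1 v S)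
      positivity
    · intro S hS x hx y hy
      by_cases h1 : (∑ v, q v * (if S = {v} then (1:ℝ) else 0)) = 0
      · have h2 : (∑ v, q v * p v S) ≠ 0 := by
          intro h2
          apply hS
          dsimp only
          rw [h1, h2, mul_zero, mul_zero, add_zero]
        obtain ⟨v, _, hv⟩ := Finset.exists_ne_zero_of_sum_ne_zero h2
        have hpv : p v S ≠ 0 := fun h' => hv (by rw [h', mul_zero])
        exact (hp2 v S hpv).2 x hx y hy
      · obtain ⟨v, _, hv⟩ := Finset.exists_ne_zero_of_sum_ne_zero h1
        have hSv : S = {v} := by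
          by_contra h'
          simp [h'] at hv
        subst hSv
        rw [Finset.mem_singleton] at hx hy
        subst hx; subst hy
        exact G.loopless.irrefl _
    · rw [Finset.sum_add_distrib, ← Finset.mul_sum, ← Finset.mul_sum]
      have e1 : ∑ S : Finset V, ∑ v, q v * (if S = {v} then (1:ℝ) else 0) = 1 := by
        rw [Finset.sum_comm]
        have : ∀ v : V, ∑ S : Finset V, q v * (if S = {v} then (1:ℝ) else 0) = q v := by
          intro v
          rw [← Finset.mul_sum, Finset.sum_ite_eq' Finset.univ ({v} : Finset V)
            (fun _ => (1:ℝ))]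
          simp
        rw [Finset.sum_congr rfl fun v _ => this v, hq1]
      have e2 : ∑ S : Finset V, ∑ v, q v * p v S = 1 := by
        rw [Finset.sum_comm]
        have : ∀ v : V, ∑ S : Finset V, q v * p v S = q v := by
          intro v
          rw [← Finset.mul_sum, hp3 v, mul_one]
        rw [Finset.sum_congr rfl fun v _ => this v, hq1]
      rw [e1, e2, mul_one, mul_one]
      field_simp
      ring
    · intro u
      set F := Finset.univ.filter (fun S : Finset V => u ∈ S) with hF
      set A := ∑ v ∈ Finset.univ.filter (fun v => r v u), q v with hA
      set B := ∑ v ∈ Finset.univ.filter (fun v => r u v), q v with hB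
      -- partition identity
      have hpart : q u + A + B = 1 := by
        have hsp : Finset.univ.filter (fun v => ¬ r v u)
            = insert u (Finset.univ.filter (fun v => r u v)) := by
          ext v
          simp only [Finset.mem_filter, Finset.mem_univ, true_and, Finset.mem_insert]
          constructor
          · intro hn
            rcases eq_or_ne v u with rfl | hne
            · exact Or.inl rfl
            · exact Or.inr ((hr.2 u v hne.symm).mpr hn)
          · rintro (rfl | huv)
            · exact hr.1 v
            · rcases eq_or_ne v u with rfl | hne
              · exact absurd huv (hr.1 v)
              · exact (hr.2 u v hne.symm).mp huv
        have hnotmem : u ∉ Finset.univ.filter (fun v => r u v) := by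
          simp [hr.1 u]
        have := Finset.sum_filter_add_sum_filter_not Finset.univ (fun v => r v u) q
        rw [hsp, Finset.sum_insert hnotmem, hq1] at this
        rw [hA, hB]; linarith
      have hhalf : (1:ℝ)/2 ≤ q u + A := by
        have := hq2 u
        rw [← hA, ← hB] at this
        linarith [hq0 u]
      -- expand the coverage sum
      have expand : ∑ S ∈ F, ((1/(c+1)) * (∑ v, q v * (if S = {v} then (1:ℝ) else 0))
            + (c/(c+1)) * (∑ v, q v * p v S))
          = (1/(c+1)) * q u + (c/(c+1)) * (∑ v, q v * ∑ S ∈ F, p v S) := by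
        rw [Finset.sum_add_distrib, ← Finset.mul_sum, ← Finset.mul_sum]
        congr 2
        · rw [Finset.sum_comm]
          have e3 : ∀ v : V, ∑ S ∈ F, q v * (if S = {v} then (1:ℝ) else 0)
              = q v * (if u = v then 1 else 0) := by
            intro v
            rw [← Finset.mul_sum, Finset.sum_ite_eq' F ({v} : Finset V) (fun _ => (1:ℝ))]
            congr 1
            simp [hF, eq_comm]
          rw [Finset.sum_congr rfl fun v _ => e3 v]
          simp [mul_ite, Finset.sum_ite_eq]
        · rw [Finset.sum_comm]
          exact Finset.sum_congr rfl fun v _ => (Finset.mul_sum _ _ _).symm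
      rw [expand]
      -- lower bound the second sum
      have hT2 : A * (1/c) ≤ ∑ v, q v * ∑ S ∈ F, p v S := by
        have step1 : ∑ v ∈ Finset.univ.filter (fun v => r v u), q v * (1/c)
            ≤ ∑ v ∈ Finset.univ.filter (fun v => r v u), q v * ∑ S ∈ F, p v S := by
          apply Finset.sum_le_sum
          intro v hv
          rw [Finset.mem_filter] at hv
          exact mul_le_mul_of_nonneg_left (hp4 v u hv.2) (hq0 v)
        have step2 : ∑ v ∈ Finset.univ.filter (fun v => r v u), q v * ∑ S ∈ F, p v S
            ≤ ∑ v, q v * ∑ S ∈ F, p v S := by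
          apply Finset.sum_le_sum_of_subset_of_nonneg (Finset.filter_subset _ _)
          intro v _ _
          exact mul_nonneg (hq0 v) (Finset.sum_nonneg fun S _ => hp1 v S)
        calc A * (1/c) = ∑ v ∈ Finset.univ.filter (fun v => r v u), q v * (1/c) := by
              rw [hA, Finset.sum_mul]
          _ ≤ _ := step1.trans step2
      have hcc : 0 < c / (c+1) := div_pos hc0 hc1
      have e4 : (c/(c+1)) * (A * (1/c)) = A / (c+1) := by
        field_simp
      have e5 : (c/(c+1)) * (A * (1/c)) ≤ (c/(c+1)) * (∑ v, q v * ∑ S ∈ F, p v S) :=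
        mul_le_mul_of_nonneg_left hT2 hcc.le
      have hfin : 1/(2*(c+1)) ≤ (1/(c+1)) * q u + A / (c+1) := by
        have h2 : (1/(c+1)) * q u + A/(c+1) = (q u + A)/(c+1) := by ring
        rw [h2, div_le_div_iff₀ (by linarith) hc1]
        nlinarith [hhalf, hc1]
      calc (1:ℝ)/(2*(c+1)) ≤ (1/(c+1)) * q u + A / (c+1) := hfin
        _ = (1/(c+1)) * q u + (c/(c+1)) * (A * (1/c)) := by rw [e4]
        _ ≤ _ := by linarith
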